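/- Let μ > 0 and 0 < r < 1, and set c = (1 − r²/48)/(1 − 7r²/48). Then c > 0, and for every positive integer m there exists κ in the open interval (2π(2m−1), 2π(2m+1)) such that (4/κ)·tan(κ/4) = c·(1 − κ²/μ). Hence the symmetric characteristic equation has infinitely many positive wavenumber solutions. -/

import Mathlib

open Real Set

lemma key (μ : ℝ) (hμ : 0 < μ) (c : ℝ) (hcpos : 0 < c) (m : ℕ) (hm : 0 < m) :
    ∃ κ ∈ Set.Ioo (2 * Real.pi * (2 * (m : ℝ) - 1)) (2 * Real.pi * (2 * (m : ℝ) + 1)),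
      (4 / κ) * Real.tan (κ / 4) = c * (1 - κ ^ 2 / μ) := by
  have hπ := Real.pi_pos
  set A : ℝ := 2 * π * (2 * (m : ℝ) + 1) with hA
  have hm1 : (1 : ℝ) ≤ (m : ℝ) := by exact_mod_cast hm
  have hA4 : A / 4 = (m : ℝ) * π + π / 2 := by rw [hA]; ring
  set B : ℝ := (A / 4) * c * (1 + A ^ 2 / μ) with hB
  have hApos : 0 < A := by nlinarith
  have hBpos : 0 < B := by positivity
  set G : ℝ → ℝ := fun t => t - ((m : ℝ) * π + Real.arctan t) * c *
    (1 - (4 * ((m : ℝ) * π + Real.arctan t)) ^ 2 / μ) with hG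
  have harc : Continuous fun t : ℝ => (m : ℝ) * π + Real.arctan t :=
    continuous_const.add Real.continuous_arctan
  have hGcont : Continuous G := by
    rw [hG]
    exact continuous_id.sub ((harc.mul continuous_const).mul
      (continuous_const.sub (((continuous_const.mul harc).pow 2).div_const μ)))
  have hbound : ∀ t : ℝ, |((m : ℝ) * π + Real.arctan t) * c *
      (1 - (4 * ((m : ℝ) * π + Real.arctan t)) ^ 2 / μ)| ≤ B := by
    intro t
    set u := (m : ℝ) * π + Real.arctan t with hu
    have h1 := Real.arctan_lt_pi_div_two t
    have h2 := Real.neg_pi_div_two_lt_arctan t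
    have hu0 : 0 < u := by nlinarith
    have huA : u ≤ A / 4 := by rw [hA4]; nlinarith
    have hx : (0:ℝ) ≤ (4 * u) ^ 2 / μ := by positivity
    have habs : |u * c * (1 - (4 * u) ^ 2 / μ)| ≤ u * c * (1 + (4 * u) ^ 2 / μ) := by
      rw [abs_mul, abs_of_pos (mul_pos hu0 hcpos)]
      refine mul_le_mul_of_nonneg_left ?_ (le_of_lt (mul_pos hu0 hcpos))
      exact abs_le.mpr ⟨by linarith, by linarith⟩
    refine habs.trans ?_
    rw [hB]
    have h16 : (4 * u) ^ 2 ≤ A ^ 2 := by nlinarith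
    have hy : 1 + (4 * u) ^ 2 / μ ≤ 1 + A ^ 2 / μ := by gcongr
    exact mul_le_mul (mul_le_mul_of_nonneg_right huA hcpos.le) hy (by positivity) (by positivity)
  have hG0 : G (-(B + 1)) ≤ 0 := by
    have h := abs_le.mp (hbound (-(B + 1)))
    simp only [hG]
    linarith [h.1]
  have hG1 : 0 ≤ G (B + 1) := by
    have h := abs_le.mp (hbound (B + 1))
    simp only [hG]
    linarith [h.2]
  have hle : -(B + 1) ≤ B + 1 := by linarith
  obtain ⟨t, _, ht⟩ := intermediate_value_Icc hle hGcont.continuousOn ⟨hG0, hG1⟩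
  set κ : ℝ := 4 * ((m : ℝ) * π + Real.arctan t) with hκ
  have h1 := Real.arctan_lt_pi_div_two t
  have h2 := Real.neg_pi_div_two_lt_arctan t
  have hκpos : 0 < κ := by rw [hκ]; nlinarith
  refine ⟨κ, ⟨by rw [hκ]; nlinarith, by rw [hκ]; nlinarith⟩, ?_⟩
  have htan : Real.tan (κ / 4) = t := by
    have hq : κ / 4 = Real.arctan t + (m : ℝ) * π := by rw [hκ]; ring
    rw [hq, (Real.tan_periodic.nat_mul m) (Real.arctan t), Real.tan_arctan]
  have hteq : t = ((m : ℝ) * π + Real.arctan t) * c *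
      (1 - (4 * ((m : ℝ) * π + Real.arctan t)) ^ 2 / μ) := by
    have h0 : G t = 0 := ht
    simp only [hG] at h0
    linarith
  rw [htan, hteq, ← hκ]
  have hκ4 : (m : ℝ) * π + Real.arctan t = κ / 4 := by rw [hκ]; ring
  rw [hκ4]
  field_simp

/-- The symmetric characteristic equation `(4/κ)tan(κ/4) = c(1 − κ²/μ)` with
`c = (1−r²/48)/(1−7r²/48) > 0` has a root in each interval
`(2π(2m−1), 2π(2m+1))`, hence infinitely many positive roots. -/
theorem stmt9 (μ r : ℝ) (hμ : 0 < μ) (hr0 : 0 < r) (hr1 : r < 1)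
    (c : ℝ) (hc : c = (1 - r ^ 2 / 48) / (1 - 7 * r ^ 2 / 48)) :
    0 < c ∧
    (∀ m : ℕ, 0 < m →
      ∃ κ ∈ Set.Ioo (2 * Real.pi * (2 * (m : ℝ) - 1)) (2 * Real.pi * (2 * (m : ℝ) + 1)),
        (4 / κ) * Real.tan (κ / 4) = c * (1 - κ ^ 2 / μ)) ∧
    {κ : ℝ | 0 < κ ∧ (4 / κ) * Real.tan (κ / 4) = c * (1 - κ ^ 2 / μ)}.Infinite := by
  have hr2 : r ^ 2 < 1 := by nlinarith
  have hcpos : 0 < c := by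
    rw [hc]
    apply div_pos <;> nlinarith
  refine ⟨hcpos, fun m hm => key μ hμ c hcpos m hm, ?_⟩
  apply Set.infinite_of_not_bddAbove
  rintro ⟨b, hb⟩
  have hπ := Real.pi_pos
  obtain ⟨m, hmb⟩ := exists_nat_gt (max b 0)
  have hmb' : (m : ℝ) > b := lt_of_le_of_lt (le_max_left _ _) hmb
  have hm0 : 0 < m := by
    by_contra h
    push_neg at h
    interval_cases m
    simp at hmb
  have hm1 : (1 : ℝ) ≤ (m : ℝ) := by exact_mod_cast hm0
  obtain ⟨κ, hκmem, hκeq⟩ := key μ hμ c hcpos m hm0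
  have hπ3 : (3 : ℝ) < π := by linarith [Real.pi_gt_three]
  have hκb : b < κ := by
    have := hκmem.1
    nlinarith
  have hκpos : 0 < κ := by
    have := hκmem.1
    nlinarith
  exact absurd (hb ⟨hκpos, hκeq⟩) (not_le.mpr hκb)
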